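/- The measure π(b) := G(b,b)², where G(b,b) := [ ∏_{j=1}^{d(1)} Q q^{L + x_j − N→^1_{x_j}(b)} ] · ζ_0 · [ ∏_{i=1}^{d(−1)} q^{L − y_i − N→^1_{y_i}(b)} ] with ζ_0 := Q q^{L−d(1)}, 1, or q^{L−d(1)} according as b(0) = 1, 0, or −1, is reversible for the single-species open ASEP: for all configurations b, b′ one has π(b) 𝓛(b,b′) = π(b′) 𝓛(b′,b), where 𝓛 is the open ASEP generator. -/

import Mathlib

open Matrix BigOperators Finset

noncomputable section

namespace Stmt9

/-- Configurations of the single-species open ASEP on sites `{0,1,…,L}`.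
Values are encoded in `Fin 3`: `0 ↦ −1`, `1 ↦ 0` (hole), `2 ↦ 1`;
this encoding is order-preserving. -/
abbrev Conf (L : ℕ) := Fin (L + 1) → Fin 3

/-- `N→¹_x(b)`: the number of sites strictly to the right of `x` with `b`-value `1`. -/
def Nr1 (L : ℕ) (b : Conf L) (x : Fin (L + 1)) : ℕ :=
  (Finset.univ.filter (fun y : Fin (L + 1) => x < y ∧ b y = 2)).card

/-- `d(1)`: the number of sites in `{1,…,L}` with `b`-value `1`. -/
def d1 (L : ℕ) (b : Conf L) : ℕ :=
  (Finset.univ.filter (fun x : Fin (L + 1) => 0 < (x : ℕ) ∧ b x = 2)).card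

/-- `ζ₀ = Q q^{L−d(1)}`, `1`, or `q^{L−d(1)}` according as `b(0) = 1`, `0`, or `−1`. -/
def zeta0 (L : ℕ) (q Q : ℝ) (b : Conf L) : ℝ :=
  if b 0 = 2 then Q * q ^ ((L : ℤ) - (d1 L b : ℤ))
  else if b 0 = 1 then 1
  else q ^ ((L : ℤ) - (d1 L b : ℤ))

/-- `G(b,b) = [∏_{j=1}^{d(1)} Q q^{L+x_j−N→¹_{x_j}(b)}] ζ₀ [∏_{i=1}^{d(−1)} q^{L−y_i−N→¹_{y_i}(b)}]`. -/
def Gfun (L : ℕ) (q Q : ℝ) (b : Conf L) : ℝ :=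
  (∏ x ∈ Finset.univ.filter (fun x : Fin (L + 1) => 0 < (x : ℕ) ∧ b x = 2),
      Q * q ^ ((L : ℤ) + ((x : ℕ) : ℤ) - (Nr1 L b x : ℤ))) *
    zeta0 L q Q b *
    (∏ y ∈ Finset.univ.filter (fun y : Fin (L + 1) => 0 < (y : ℕ) ∧ b y = 0),
      q ^ ((L : ℤ) - ((y : ℕ) : ℤ) - (Nr1 L b y : ℤ)))

/-- Bulk off-diagonal rates of the open ASEP generator. -/
def bulk (L : ℕ) (q : ℝ) (η η' : Conf L) : ℝ :=
  ∑ x : Fin (L + 1),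
    if h : (x : ℕ) + 1 < L + 1 then
      (if η' = η ∘ Equiv.swap x ⟨(x : ℕ) + 1, h⟩ ∧ η x ≠ η ⟨(x : ℕ) + 1, h⟩ then
        (if η ⟨(x : ℕ) + 1, h⟩ < η x then q ^ 2 else 1)
      else 0)
    else 0

/-- Boundary off-diagonal rates of the open ASEP generator at site `0`. -/
def bdry (L : ℕ) (Q : ℝ) (η η' : Conf L) : ℝ :=
  if (∀ z : Fin (L + 1), z ≠ 0 → η' z = η z) ∧ η 0 = 2 ∧ η' 0 = 0 then 1
  else if (∀ z : Fin (L + 1), z ≠ 0 → η' z = η z) ∧ η 0 = 0 ∧ η' 0 = 2 then Q ^ 2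
  else 0

/-- The generator `𝓛` of the single-species open ASEP on `{0,…,L}`. -/
def gen (L : ℕ) (q Q : ℝ) : Matrix (Conf L) (Conf L) ℝ :=
  fun η η' =>
    if η' = η then
      -∑ η'' : Conf L,
        (if η'' = η then 0 else bulk L q η η'' + bdry L Q η η'')
    else bulk L q η η' + bdry L Q η η'

lemma fin3_cases (v : Fin 3) : v = 0 ∨ v = 1 ∨ v = 2 := by fin_cases v <;> simp

lemma prod_zpow_sum {q : ℝ} (hq : q ≠ 0) {α : Type*} (s : Finset α) (f : α → ℤ) :
    (∏ x ∈ s, q ^ f x) = q ^ (∑ x ∈ s, f x) := by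
  classical
  induction s using Finset.induction_on with
  | empty => simp
  | insert _ _ h ih => rw [Finset.prod_insert h, Finset.sum_insert h, ih, zpow_add₀ hq]

def n2 (L : ℕ) (b : Conf L) : ℕ :=
  (Finset.univ.filter (fun x : Fin (L + 1) => b x = 2)).card

def Fx (L : ℕ) (b : Conf L) (x : Fin (L + 1)) : ℤ :=
  (if b x = 2 then (L : ℤ) + ((x : ℕ) : ℤ) - (Nr1 L b x : ℤ) else 0)
  + (if b x = 0 then (L : ℤ) - ((x : ℕ) : ℤ) - (Nr1 L b x : ℤ) else 0)

def Eexp (L : ℕ) (b : Conf L) : ℤ := ∑ x, Fx L b x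

lemma Nr1_eq_sum (L : ℕ) (b : Conf L) (x : Fin (L + 1)) :
    Nr1 L b x = ∑ y : Fin (L + 1), if x < y ∧ b y = 2 then 1 else 0 :=
  Finset.card_filter _ _

lemma Nr1_zero (L : ℕ) (b : Conf L) : Nr1 L b 0 = d1 L b := by
  unfold Nr1 d1
  apply congrArg
  apply Finset.filter_congr
  intro y _
  rw [Fin.lt_def, Fin.val_zero]


lemma n2_eq (L : ℕ) (b : Conf L) : n2 L b = d1 L b + (if b 0 = 2 then 1 else 0) := by
  unfold n2 d1
  rw [Finset.card_filter, Finset.card_filter, Fin.sum_univ_succ, Fin.sum_univ_succ]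
  simp only [Fin.val_zero, Fin.val_succ, Nat.succ_pos, lt_self_iff_false, false_and, if_false,
    true_and, Nat.zero_lt_succ]
  omega

lemma Eexp_eq (L : ℕ) (b : Conf L) :
    Eexp L b =
      (∑ x ∈ Finset.univ.filter (fun x : Fin (L + 1) => 0 < (x : ℕ) ∧ b x = 2),
        ((L : ℤ) + ((x : ℕ) : ℤ) - (Nr1 L b x : ℤ)))
      + (if b 0 = 1 then 0 else (L : ℤ) - (d1 L b : ℤ))
      + (∑ y ∈ Finset.univ.filter (fun y : Fin (L + 1) => 0 < (y : ℕ) ∧ b y = 0),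
        ((L : ℤ) - ((y : ℕ) : ℤ) - (Nr1 L b y : ℤ))) := by
  unfold Eexp Fx
  rw [Finset.sum_add_distrib, Finset.sum_filter, Finset.sum_filter,
    Fin.sum_univ_succ, Fin.sum_univ_succ,
    Fin.sum_univ_succ (f := fun x => if 0 < (x : ℕ) ∧ b x = 2 then
      ((L : ℤ) + ((x : ℕ) : ℤ) - (Nr1 L b x : ℤ)) else 0),
    Fin.sum_univ_succ (f := fun y => if 0 < (y : ℕ) ∧ b y = 0 then
      ((L : ℤ) - ((y : ℕ) : ℤ) - (Nr1 L b y : ℤ)) else 0)]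
  simp only [Fin.val_zero, Fin.val_succ, Nat.succ_pos, lt_self_iff_false, false_and, if_false,
    true_and, Nat.zero_lt_succ]
  have h0 : ((if b 0 = 2 then (L : ℤ) + ((0:ℕ) : ℤ) - (Nr1 L b 0 : ℤ) else 0)
      + (if b 0 = 0 then (L : ℤ) - ((0:ℕ) : ℤ) - (Nr1 L b 0 : ℤ) else 0))
      = (if b 0 = 1 then 0 else (L : ℤ) - (d1 L b : ℤ)) := by
    rw [Nr1_zero]
    rcases fin3_cases (b 0) with h | h | h <;> simp [h]
  push_cast at h0 ⊢
  rw [← h0]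
  ring

lemma Grepr (L : ℕ) {q : ℝ} (Q : ℝ) (hq : q ≠ 0) (b : Conf L) :
    Gfun L q Q b = Q ^ n2 L b * q ^ Eexp L b := by
  unfold Gfun
  rw [Finset.prod_mul_distrib, Finset.prod_const, prod_zpow_sum hq, prod_zpow_sum hq]
  rw [Eexp_eq, n2_eq]
  unfold zeta0 d1
  rcases fin3_cases (b 0) with h | h | h <;>
    simp only [h, if_true, if_false, show ¬((0:Fin 3)=2) by decide, show ¬((0:Fin 3)=1) by decide,
      show ¬((1:Fin 3)=2) by decide, show ((1:Fin 3)=1) by decide, show ¬((2:Fin 3)=1) by decide,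
      show ((2:Fin 3)=2) by decide] <;>
    rw [zpow_add₀ hq, zpow_add₀ hq] <;>
    [skip; skip; rw [pow_succ]] <;> simp only [add_sub_assoc, zpow_zero, mul_one] <;> ring


lemma Nr1_swap_ne (L : ℕ) (b : Conf L) {x x1 z : Fin (L + 1)}
    (hx1 : (x1 : ℕ) = (x : ℕ) + 1) (hz : z ≠ x) :
    Nr1 L (b ∘ Equiv.swap x x1) z = Nr1 L b z := by
  have hzx : (z : ℕ) ≠ (x : ℕ) := fun h => hz (Fin.ext h)
  have key : ∀ y : Fin (L + 1), (z < y ↔ z < Equiv.swap x x1 y) := by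
    intro y
    rcases eq_or_ne y x with rfl | h1
    · rw [Equiv.swap_apply_left, Fin.lt_def, Fin.lt_def, hx1]
      omega
    rcases eq_or_ne y x1 with rfl | h2
    · rw [Equiv.swap_apply_right, Fin.lt_def, Fin.lt_def, hx1]
      omega
    · rw [Equiv.swap_apply_of_ne_of_ne h1 h2]
  rw [Nr1_eq_sum, Nr1_eq_sum]
  refine Fintype.sum_equiv (Equiv.swap x x1) _ _ (fun y => ?_)
  simp only [Function.comp_apply, key y]

lemma Nr1_succ (L : ℕ) (b : Conf L) {x x1 : Fin (L + 1)} (hx1 : (x1 : ℕ) = (x : ℕ) + 1) :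
    Nr1 L b x = (if b x1 = 2 then 1 else 0) + Nr1 L b x1 := by
  rw [Nr1_eq_sum, Nr1_eq_sum]
  have key : ∀ y : Fin (L + 1), (if x < y ∧ b y = 2 then (1 : ℕ) else 0)
      = (if y = x1 then (if b y = 2 then 1 else 0) else 0)
        + (if x1 < y ∧ b y = 2 then 1 else 0) := by
    intro y
    by_cases h2 : b y = 2
    · simp only [h2, and_true, if_true]
      have hx : x < y ↔ (y = x1 ∨ x1 < y) := by
        rw [Fin.lt_def, Fin.lt_def, Fin.ext_iff, hx1]
        omega
      by_cases h3 : y = x1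
      · have hlt : x < y := hx.mpr (Or.inl h3)
        have hnlt : ¬ x1 < y := by rw [h3]; exact lt_irrefl _
        have hltx1 : x < x1 := h3 ▸ hlt
        simp [h3, hlt, hnlt, hltx1]
      · simp only [h3, if_false, zero_add]
        have : x < y ↔ x1 < y := by rw [hx]; tauto
        simp only [this]
    · simp [h2]
  rw [Finset.sum_congr rfl (fun y _ => key y), Finset.sum_add_distrib,
    Finset.sum_ite_eq' Finset.univ x1 (fun y => if b y = 2 then 1 else 0)]
  simp

lemma n2_swap (L : ℕ) (b : Conf L) (x x1 : Fin (L + 1)) :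
    n2 L (b ∘ Equiv.swap x x1) = n2 L b := by
  unfold n2
  rw [Finset.card_filter, Finset.card_filter]
  exact Fintype.sum_equiv (Equiv.swap x x1) _ _ (fun y => rfl)

lemma Eexp_swap (L : ℕ) (b : Conf L) {x x1 : Fin (L + 1)}
    (hx1 : (x1 : ℕ) = (x : ℕ) + 1) (hne : b x ≠ b x1) :
    Eexp L (b ∘ Equiv.swap x x1) = Eexp L b + (if b x1 < b x then 1 else -1) := by
  have hxx1 : x ≠ x1 := by
    intro h
    rw [h] at hx1
    omega
  set b' := b ∘ Equiv.swap x x1 with hb'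
  have hb'x : b' x = b x1 := by simp [hb', Equiv.swap_apply_left]
  have hb'x1 : b' x1 = b x := by simp [hb', Equiv.swap_apply_right]
  have hb'z : ∀ z, z ≠ x → z ≠ x1 → b' z = b z := fun z h1 h2 => by
    simp [hb', Equiv.swap_apply_of_ne_of_ne h1 h2]
  have hN : ∀ z, z ≠ x → Nr1 L b' z = Nr1 L b z := fun z hzz => Nr1_swap_ne L b hx1 hzz
  have hFx : ∀ z ∈ Finset.univ, z ∉ ({x, x1} : Finset (Fin (L + 1))) →
      Fx L b' z - Fx L b z = 0 := by
    intro z _ hzmem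
    simp only [Finset.mem_insert, Finset.mem_singleton, not_or] at hzmem
    unfold Fx
    rw [hb'z z hzmem.1 hzmem.2, hN z hzmem.1]
    ring
  have hkey : Eexp L b' - Eexp L b = ∑ z ∈ ({x, x1} : Finset (Fin (L + 1))), (Fx L b' z - Fx L b z) := by
    unfold Eexp
    rw [← Finset.sum_sub_distrib]
    exact (Finset.sum_subset (Finset.subset_univ _) hFx).symm
  rw [Finset.sum_pair hxx1] at hkey
  have hNx1 : Nr1 L b' x1 = Nr1 L b x1 := hN x1 (Ne.symm hxx1)
  have hNbx : Nr1 L b x = (if b x1 = 2 then 1 else 0) + Nr1 L b x1 := Nr1_succ L b hx1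
  have hNb'x : Nr1 L b' x = (if b x = 2 then 1 else 0) + Nr1 L b x1 := by
    rw [Nr1_succ L b' hx1, hb'x1, hNx1]
  unfold Fx at hkey
  rw [hb'x, hb'x1, hNb'x, hNbx, hNx1] at hkey
  have hval : (x1 : ℕ) = (x : ℕ) + 1 := hx1
  rcases fin3_cases (b x) with ha | ha | ha <;> rcases fin3_cases (b x1) with hc | hc | hc <;>
    rw [ha, hc] at hkey hne ⊢ <;>
    simp only [show ¬((0:Fin 3) = 2) by decide, show ¬((1:Fin 3) = 2) by decide,
      show ((2:Fin 3) = 2) by decide, show ¬((1:Fin 3) = 0) by decide,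
      show ¬((2:Fin 3) = 0) by decide, show ((0:Fin 3) = 0) by decide,
      show ¬((0:Fin 3) < 0) by decide, show ((0:Fin 3) < 1) by decide,
      show ((0:Fin 3) < 2) by decide, show ¬((1:Fin 3) < 0) by decide,
      show ¬((1:Fin 3) < 1) by decide, show ((1:Fin 3) < 2) by decide,
      show ¬((2:Fin 3) < 0) by decide, show ¬((2:Fin 3) < 1) by decide,
      show ¬((2:Fin 3) < 2) by decide, if_true, if_false,
      ne_eq, not_true_eq_false, not_false_eq_true] at hkey hne ⊢ <;>
    first
      | exact absurd rfl hne
      | (push_cast at hkey ⊢; omega)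


lemma bulk_balance (L : ℕ) {q : ℝ} (Q : ℝ) (hq : q ≠ 0) (b b' : Conf L) :
    (Gfun L q Q b) ^ 2 * bulk L q b b' = (Gfun L q Q b') ^ 2 * bulk L q b' b := by
  unfold bulk
  rw [Finset.mul_sum, Finset.mul_sum]
  refine Finset.sum_congr rfl (fun x _ => ?_)
  by_cases h : (x : ℕ) + 1 < L + 1
  · rw [dif_pos h, dif_pos h]
    set x1 : Fin (L + 1) := ⟨(x : ℕ) + 1, h⟩ with hx1def
    have hx1 : (x1 : ℕ) = (x : ℕ) + 1 := rfl
    by_cases hc : b' = b ∘ Equiv.swap x x1 ∧ b x ≠ b x1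
    · obtain ⟨hceq, hcne⟩ := hc
      have hswap : b = b' ∘ Equiv.swap x x1 := by
        rw [hceq]
        funext z
        simp [Function.comp, Equiv.swap_apply_self]
      have hb'x : b' x = b x1 := by rw [hceq]; simp [Equiv.swap_apply_left]
      have hb'x1 : b' x1 = b x := by rw [hceq]; simp [Equiv.swap_apply_right]
      have hcond2 : b = b' ∘ Equiv.swap x x1 ∧ b' x ≠ b' x1 :=
        ⟨hswap, by rw [hb'x, hb'x1]; exact hcne.symm⟩
      rw [if_pos (show b' = b ∘ Equiv.swap x x1 ∧ b x ≠ b x1 from ⟨hceq, hcne⟩),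
        if_pos hcond2]
      have hE : Eexp L b' = Eexp L b + (if b x1 < b x then 1 else -1) := by
        rw [hceq]; exact Eexp_swap L b hx1 hcne
      have hn2 : n2 L b' = n2 L b := by rw [hceq]; exact n2_swap L b x x1
      have hG : Gfun L q Q b' = Gfun L q Q b * q ^ (if b x1 < b x then (1:ℤ) else -1) := by
        rw [Grepr L Q hq, Grepr L Q hq, hn2, hE, zpow_add₀ hq]
        ring
      rw [hG, hb'x, hb'x1]
      rcases lt_trichotomy (b x1) (b x) with hlt | heq | hgt
      · rw [if_pos hlt, if_pos hlt, if_neg (asymm hlt)]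
        simp only [zpow_one]
        ring
      · exact absurd heq.symm hcne
      · rw [if_neg (asymm hgt), if_neg (asymm hgt), if_pos hgt]
        have hinv : q ^ (-1 : ℤ) = q⁻¹ := by
          rw [_root_.zpow_neg, zpow_one]
        rw [hinv]
        field_simp
        try ring
    · have hc' : ¬ (b = b' ∘ Equiv.swap x x1 ∧ b' x ≠ b' x1) := by
        rintro ⟨h1, h2⟩
        apply hc
        constructor
        · rw [h1]
          funext z
          simp [Function.comp, Equiv.swap_apply_self]
        · have e1 : b x = b' x1 := by rw [h1]; simp [Equiv.swap_apply_left]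
          have e2 : b x1 = b' x := by rw [h1]; simp [Equiv.swap_apply_right]
          rw [e1, e2]
          exact h2.symm
      rw [if_neg hc, if_neg hc']
      ring
  · rw [dif_neg h, dif_neg h]
    ring

lemma bdry_balance (L : ℕ) {q : ℝ} {Q : ℝ} (hq : q ≠ 0) (b b' : Conf L) :
    (Gfun L q Q b) ^ 2 * bdry L Q b b' = (Gfun L q Q b') ^ 2 * bdry L Q b' b := by
  unfold bdry
  by_cases hA : ∀ z : Fin (L + 1), z ≠ 0 → b' z = b z
  · have hA' : ∀ z : Fin (L + 1), z ≠ 0 → b z = b' z := fun z hz => (hA z hz).symm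
    have hN : ∀ z, Nr1 L b' z = Nr1 L b z := by
      intro z
      rw [Nr1_eq_sum, Nr1_eq_sum]
      refine Finset.sum_congr rfl (fun y _ => ?_)
      by_cases hzy : z < y
      · have hy0 : y ≠ 0 := by
          intro h0
          rw [h0] at hzy
          exact absurd hzy (by simp [Fin.lt_def])
        rw [hA y hy0]
      · simp [hzy]
    have hd : d1 L b' = d1 L b := by rw [← Nr1_zero, ← Nr1_zero, hN]
    have hFx : ∀ z : Fin (L + 1), z ≠ 0 → Fx L b' z = Fx L b z := by
      intro z hz
      unfold Fx
      rw [hA z hz, hN z]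
    have hE0 : Eexp L b' = Eexp L b + (Fx L b' 0 - Fx L b 0) := by
      unfold Eexp
      rw [Fin.sum_univ_succ, Fin.sum_univ_succ (f := fun i => Fx L b i)]
      rw [Finset.sum_congr rfl (fun i _ => hFx i.succ (Fin.succ_ne_zero i))]
      ring
    rcases fin3_cases (b 0) with hb0 | hb0 | hb0 <;>
      rcases fin3_cases (b' 0) with hb0' | hb0' | hb0' <;>
      first
      | -- trivial cases: all four conditions false
        (rw [if_neg (show ¬ ((∀ z : Fin (L+1), z ≠ 0 → b' z = b z) ∧ b 0 = 2 ∧ b' 0 = 0) by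
              rintro ⟨_, h2, h3⟩; rw [hb0] at h2; rw [hb0'] at h3; revert h2 h3; decide),
            if_neg (show ¬ ((∀ z : Fin (L+1), z ≠ 0 → b' z = b z) ∧ b 0 = 0 ∧ b' 0 = 2) by
              rintro ⟨_, h2, h3⟩; rw [hb0] at h2; rw [hb0'] at h3; revert h2 h3; decide),
            if_neg (show ¬ ((∀ z : Fin (L+1), z ≠ 0 → b z = b' z) ∧ b' 0 = 2 ∧ b 0 = 0) by
              rintro ⟨_, h2, h3⟩; rw [hb0'] at h2; rw [hb0] at h3; revert h2 h3; decide),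
            if_neg (show ¬ ((∀ z : Fin (L+1), z ≠ 0 → b z = b' z) ∧ b' 0 = 0 ∧ b 0 = 2) by
              rintro ⟨_, h2, h3⟩; rw [hb0'] at h2; rw [hb0] at h3; revert h2 h3; decide)]
         ring)
      | -- case b 0 = 2, b' 0 = 0
        (rw [if_pos (show (∀ z : Fin (L+1), z ≠ 0 → b' z = b z) ∧ b 0 = 2 ∧ b' 0 = 0 from
              ⟨hA, hb0, hb0'⟩),
            if_neg (show ¬ ((∀ z : Fin (L+1), z ≠ 0 → b z = b' z) ∧ b' 0 = 2 ∧ b 0 = 0) by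
              rintro ⟨_, h2, _⟩; rw [hb0'] at h2; exact absurd h2 (by decide)),
            if_pos (show (∀ z : Fin (L+1), z ≠ 0 → b z = b' z) ∧ b' 0 = 0 ∧ b 0 = 2 from
              ⟨hA', hb0', hb0⟩)]
         have hF0 : Fx L b' 0 = Fx L b 0 := by
           unfold Fx
           rw [hb0, hb0', hN]
           rw [if_neg (by decide : ¬((0:Fin 3) = 2)), if_pos (rfl : (0:Fin 3) = 0),
             if_pos (rfl : (2:Fin 3) = 2), if_neg (by decide : ¬((2:Fin 3) = 0))]
           push_cast [Fin.val_zero]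
           ring
         have hE : Eexp L b' = Eexp L b := by rw [hE0, hF0]; ring
         have hn : n2 L b = n2 L b' + 1 := by
           rw [n2_eq, n2_eq, hd, hb0, hb0']
           rw [if_pos (rfl : (2:Fin 3) = 2), if_neg (by decide : ¬((0:Fin 3) = 2))]
         rw [Grepr L Q hq b, Grepr L Q hq b', hE, hn, pow_succ]
         ring)
      | -- case b 0 = 0, b' 0 = 2
        (rw [if_neg (show ¬ ((∀ z : Fin (L+1), z ≠ 0 → b' z = b z) ∧ b 0 = 2 ∧ b' 0 = 0) by
              rintro ⟨_, h2, _⟩; rw [hb0] at h2; exact absurd h2 (by decide)),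
            if_pos (show (∀ z : Fin (L+1), z ≠ 0 → b' z = b z) ∧ b 0 = 0 ∧ b' 0 = 2 from
              ⟨hA, hb0, hb0'⟩),
            if_pos (show (∀ z : Fin (L+1), z ≠ 0 → b z = b' z) ∧ b' 0 = 2 ∧ b 0 = 0 from
              ⟨hA', hb0', hb0⟩)]
         have hF0 : Fx L b' 0 = Fx L b 0 := by
           unfold Fx
           rw [hb0, hb0', hN]
           rw [if_pos (rfl : (2:Fin 3) = 2), if_neg (by decide : ¬((2:Fin 3) = 0)),
             if_neg (by decide : ¬((0:Fin 3) = 2)), if_pos (rfl : (0:Fin 3) = 0)]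
           push_cast [Fin.val_zero]
           ring
         have hE : Eexp L b' = Eexp L b := by rw [hE0, hF0]; ring
         have hn : n2 L b' = n2 L b + 1 := by
           rw [n2_eq, n2_eq, hd, hb0, hb0']
           rw [if_pos (rfl : (2:Fin 3) = 2), if_neg (by decide : ¬((0:Fin 3) = 2))]
         rw [Grepr L Q hq b, Grepr L Q hq b', hE, hn, pow_succ]
         ring)
  · have hA2 : ¬ ∀ z : Fin (L + 1), z ≠ 0 → b z = b' z := by
      intro h
      exact hA (fun z hz => (h z hz).symm)
    rw [if_neg (fun h => hA h.1), if_neg (fun h => hA h.1),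
      if_neg (fun h => hA2 h.1), if_neg (fun h => hA2 h.1)]
    ring

/-- **Reversibility** (Proposition, part (c), in the proof of Theorem 1.3):
the measure `π(b) = G(b,b)²` is reversible for the single-species open ASEP:
`π(b) 𝓛(b,b′) = π(b′) 𝓛(b′,b)` for all configurations `b, b′`. -/
theorem Gsquared_reversible_for_open_ASEP (L : ℕ) (hL : 1 ≤ L)
    (q Q : ℝ) (hq0 : 0 < q) (hq1 : q < 1) (hQ0 : 0 < Q) (hQ1 : Q < 1)
    (b b' : Conf L) :
    (Gfun L q Q b) ^ 2 * gen L q Q b b' = (Gfun L q Q b') ^ 2 * gen L q Q b' b := by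
  have hq : q ≠ 0 := ne_of_gt hq0
  by_cases hbb : b' = b
  · subst hbb; rfl
  · unfold gen
    rw [if_neg hbb, if_neg (fun h => hbb h.symm)]
    rw [mul_add, mul_add, bulk_balance L Q hq b b', bdry_balance L hq b b']

end Stmt9

end
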